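/- Let 𝔽 be a finite field. A full-rank k×n matrix A over 𝔽 (k ≤ n) is in reduced row echelon form if and only if: the linear map T : 𝔽ⁿ → 𝔽ᵏ represented by A in the standard bases is a rigid surjection with respect to the antilexicographic orders on 𝔽ⁿ and 𝔽ᵏ (induced by an order on 𝔽 with 0 < 1 first), and for every i < k some column of A equals the standard unit vector u_i. -/

import Mathlib

/-- The antilexicographic strict order on `Fin n → 𝔽` induced by an order on `𝔽`:
`x < y` iff at the largest coordinate where they differ, `x` is smaller. -/
def AntilexLT {𝔽 : Type} [LT 𝔽] {n : ℕ} (x y : Fin n → 𝔽) : Prop :=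
  ∃ i, x i < y i ∧ ∀ j, i < j → x j = y j

/-- A rigid surjection with respect to given strict orders: a surjection such that the
minimum of the preimage of `s₀` is below the minimum of the preimage of `s₁` whenever
`s₀ < s₁` (expressed via: some preimage point of `s₀` is below all preimage points of `s₁`). -/
def IsRigidSurjectionRel {α β : Type*} (ltα : α → α → Prop) (ltβ : β → β → Prop)
    (f : α → β) : Prop :=
  Function.Surjective f ∧
    ∀ s₀ s₁ : β, ltβ s₀ s₁ → ∃ a, f a = s₀ ∧ ∀ b, f b = s₁ → ltα a b

/-- A full-rank `k × n` matrix is in reduced row echelon form: there is a strictly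
increasing sequence of pivot columns `j i` with `A · u_{j i} = u_i` and
`span {A · u_l : l < j i} = span {u_l : l < i}` for all `i < k`. -/
def IsRREF {𝔽 : Type} [Field 𝔽] {k n : ℕ} (A : Matrix (Fin k) (Fin n) 𝔽) : Prop :=
  ∃ j : Fin k → Fin n, StrictMono j ∧
    (∀ i : Fin k, (fun i' => A i' (j i)) = Pi.single i 1) ∧
    ∀ i : Fin k,
      Submodule.span 𝔽 {v : Fin k → 𝔽 | ∃ l : Fin n, l < j i ∧ v = fun i' => A i' l} =
      Submodule.span 𝔽 {v : Fin k → 𝔽 | ∃ l : Fin k, l < i ∧ v = Pi.single l 1}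

namespace RREFAux

variable {𝔽 : Type} [Field 𝔽] {k n : ℕ}

/-- The subspace of vectors supported on coordinates `< i`. -/
def coordSub (𝔽 : Type) [Field 𝔽] (k i : ℕ) : Submodule 𝔽 (Fin k → 𝔽) where
  carrier := {v | ∀ m : Fin k, i ≤ m.1 → v m = 0}
  add_mem' := by intro a b ha hb m hm; simp [ha m hm, hb m hm]
  zero_mem' := by intro m hm; rfl
  smul_mem' := by intro c a ha m hm; simp [ha m hm]

lemma mem_coordSub {i : ℕ} {v : Fin k → 𝔽} :
    v ∈ coordSub 𝔽 k i ↔ ∀ m : Fin k, i ≤ m.1 → v m = 0 := Iff.rfl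

lemma single_mem_coordSub {i : ℕ} {m : Fin k} :
    (Pi.single m 1 : Fin k → 𝔽) ∈ coordSub 𝔽 k i ↔ m.1 < i := by
  constructor
  · intro h
    by_contra hm
    have := h m (le_of_not_gt hm)
    simp at this
  · intro h m' hm'
    have : m' ≠ m := by
      intro he; subst he; omega
    exact Pi.single_eq_of_ne this 1

/-- The set of unit vectors with index `< i`. -/
def sSet (𝔽 : Type) [Field 𝔽] (k i : ℕ) : Set (Fin k → 𝔽) :=
  {v | ∃ m : Fin k, m.1 < i ∧ v = Pi.single m 1}

lemma span_sSet (i : ℕ) : Submodule.span 𝔽 (sSet 𝔽 k i) = coordSub 𝔽 k i := by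
  apply le_antisymm
  · rw [Submodule.span_le]
    rintro v ⟨m, hm, rfl⟩
    exact single_mem_coordSub.2 hm
  · intro v hv
    have hv' : v = ∑ m : Fin k, Pi.single m (v m) := by
      simp [Finset.univ_sum_single]
    rw [hv']
    apply Submodule.sum_mem
    intro m _
    by_cases hm : m.1 < i
    · have : Pi.single m (v m) = v m • (Pi.single m 1 : Fin k → 𝔽) := by
        rw [← Pi.single_smul, smul_eq_mul, mul_one]
      rw [this]
      exact Submodule.smul_mem _ _ (Submodule.subset_span ⟨m, hm, rfl⟩)
    · rw [hv m (le_of_not_gt hm), Pi.single_zero]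
      exact Submodule.zero_mem _

lemma coordSub_top {i : ℕ} (h : k ≤ i) : coordSub 𝔽 k i = ⊤ := by
  rw [eq_top_iff]
  intro v _ m hm
  exact absurd hm (by omega)

lemma coordSub_zero : coordSub 𝔽 k 0 = ⊥ := by
  rw [eq_bot_iff]
  intro v hv
  have : v = 0 := funext fun m => hv m (Nat.zero_le _)
  simp [this]

lemma coordSub_succ {i : ℕ} (h : i < k) :
    coordSub 𝔽 k i ⊔ Submodule.span 𝔽 {(Pi.single (⟨i, h⟩ : Fin k) 1 : Fin k → 𝔽)} =
      coordSub 𝔽 k (i + 1) := by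
  rw [← span_sSet, ← span_sSet, ← Submodule.span_union]
  congr 1
  ext v
  constructor
  · rintro (⟨m, hm, rfl⟩ | hv)
    · exact ⟨m, by omega, rfl⟩
    · exact ⟨⟨i, h⟩, by simp, hv⟩
  · rintro ⟨m, hm, rfl⟩
    rcases Nat.lt_succ_iff_lt_or_eq.1 hm with h' | h'
    · exact Or.inl ⟨m, h', rfl⟩
    · right
      have : m = ⟨i, h⟩ := Fin.ext h'
      rw [this]; rfl


section Ordered

variable [LinearOrder 𝔽]

lemma lt_single_support (h0 : ∀ x : 𝔽, (0 : 𝔽) ≤ x) (h1 : ∀ x : 𝔽, x ≠ 0 → (1 : 𝔽) ≤ x) {a : Fin n → 𝔽} {l : Fin n}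
    (h : AntilexLT a (Pi.single l 1)) : ∀ q : Fin n, l ≤ q → a q = 0 := by
  obtain ⟨p, hp, hag⟩ := h
  have hpl : p = l := by
    by_contra hne
    rw [Pi.single_eq_of_ne hne] at hp
    exact absurd hp (not_lt.2 (h0 _))
  subst hpl
  have hal : a p = 0 := by
    by_contra hne
    rw [Pi.single_eq_same] at hp
    exact absurd hp (not_lt.2 (h1 _ hne))
  intro q hq
  rcases eq_or_lt_of_le hq with h' | h'
  · rw [← h']; exact hal
  · rw [hag q h', Pi.single_eq_of_ne (Fin.ne_of_gt h')]

/-- Key combinatorial lemma: if all antilex-smaller vectors than `c` are supported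
below `i` but `c` is not, then `c` is the `i`-th unit vector. -/
lemma eq_single_of_lower (h0 : ∀ x : 𝔽, (0 : 𝔽) ≤ x) (h1 : ∀ x : 𝔽, x ≠ 0 → (1 : 𝔽) ≤ x) {c : Fin k → 𝔽} {i : ℕ}
    (hA : ∀ s, AntilexLT s c → s ∈ coordSub 𝔽 k i) (hc : c ∉ coordSub 𝔽 k i) :
    ∃ h : i < k, c = Pi.single (⟨i, h⟩ : Fin k) 1 := by
  obtain ⟨m0, him0, hm0⟩ : ∃ m : Fin k, i ≤ m.1 ∧ c m ≠ 0 := by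
    by_contra h
    push_neg at h
    exact hc fun m hm => h m hm
  classical
  set D : Finset (Fin k) := Finset.univ.filter (fun m => c m ≠ 0) with hD
  have hDne : D.Nonempty := ⟨m0, by simp [hD, hm0]⟩
  set t := D.max' hDne with ht
  have hct : c t ≠ 0 := by
    have := D.max'_mem hDne
    simpa [hD] using this
  have htop : ∀ q, t < q → c q = 0 := by
    intro q hq
    by_contra hne
    exact absurd (D.le_max' q (by simp [hD, hne])) (not_le.2 hq)
  have hit : i ≤ t.1 := le_trans him0 (D.le_max' m0 (by simp [hD, hm0]))
  have hsnot : (Pi.single t 1 : Fin k → 𝔽) ∉ coordSub 𝔽 k i := by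
    rw [single_mem_coordSub]; omega
  have hc1 : c t = 1 := by
    by_contra hne
    refine hsnot (hA _ ⟨t, ?_, fun q hq => ?_⟩)
    · rw [Pi.single_eq_same]
      exact lt_of_le_of_ne (h1 _ hct) (Ne.symm hne)
    · rw [Pi.single_eq_of_ne (Fin.ne_of_gt hq), htop q hq]
  have hrest : ∀ m : Fin k, m ≠ t → c m = 0 := by
    by_contra h
    push_neg at h
    obtain ⟨m1, hm1t, hm1⟩ := h
    set D' : Finset (Fin k) := Finset.univ.filter (fun m => c m ≠ 0 ∧ m ≠ t) with hD'
    have hD'ne : D'.Nonempty := ⟨m1, by simp [hD', hm1, hm1t]⟩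
    set p := D'.max' hD'ne with hp
    obtain ⟨-, hcp, hpt⟩ := Finset.mem_filter.1 (D'.max'_mem hD'ne)
    refine hsnot (hA _ ⟨p, ?_, fun q hq => ?_⟩)
    · rw [Pi.single_eq_of_ne hpt]
      exact lt_of_le_of_ne (h0 _) (Ne.symm hcp)
    · by_cases hqt : q = t
      · subst hqt; rw [Pi.single_eq_same, hc1]
      · rw [Pi.single_eq_of_ne hqt]
        by_contra hne
        exact absurd (D'.le_max' q (by simp [hD', hqt]; exact fun h => absurd h.symm hne))
          (not_le.2 hq)
  have hcs : c = Pi.single t 1 := by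
    funext m
    by_cases hm : m = t
    · subst hm; rw [Pi.single_eq_same, hc1]
    · rw [Pi.single_eq_of_ne hm, hrest m hm]
  have hti : t.1 = i := by
    by_contra hne
    have hit' : i < t.1 := lt_of_le_of_ne hit (Ne.symm hne)
    have hik : i < k := lt_trans hit' t.2
    have : AntilexLT (Pi.single (⟨i, hik⟩ : Fin k) 1) c := by
      refine ⟨t, ?_, fun q hq => ?_⟩
      · rw [Pi.single_eq_of_ne (by simp [Fin.ext_iff]; omega), hc1]
        exact lt_of_le_of_ne (h0 _) zero_ne_one
      · rw [Pi.single_eq_of_ne (by simp [Fin.ext_iff]; omega), htop q hq]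
    have := hA _ this
    rw [single_mem_coordSub] at this
    simp at this
  refine ⟨hti ▸ t.2, ?_⟩
  rw [hcs]
  exact congrArg (fun x => Pi.single x 1) (Fin.ext (by simp [hti]))

end Ordered

section ColSpan

variable (A : Matrix (Fin k) (Fin n) 𝔽)

/-- Span of the first `l` columns. -/
def colSpan (l : ℕ) : Submodule 𝔽 (Fin k → 𝔽) :=
  Submodule.span 𝔽 {v | ∃ q : Fin n, q.1 < l ∧ v = fun i' => A i' q}

lemma mulVec_eq_sum_cols (a : Fin n → 𝔽) :
    A.mulVec a = ∑ q : Fin n, a q • (fun i' => A i' q) := by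
  funext i
  rw [Finset.sum_apply]
  simp only [Matrix.mulVec, dotProduct, Pi.smul_apply, smul_eq_mul]
  exact Finset.sum_congr rfl fun q _ => mul_comm _ _

lemma mulVec_mem_colSpan {l : ℕ} {a : Fin n → 𝔽}
    (ha : ∀ q : Fin n, l ≤ q.1 → a q = 0) : A.mulVec a ∈ colSpan A l := by
  rw [mulVec_eq_sum_cols]
  apply Submodule.sum_mem
  intro q _
  by_cases hq : q.1 < l
  · exact Submodule.smul_mem _ _ (Submodule.subset_span ⟨q, hq, rfl⟩)
  · rw [ha q (le_of_not_gt hq), zero_smul]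
    exact Submodule.zero_mem _

lemma colSpan_mono {l l' : ℕ} (h : l ≤ l') : colSpan A l ≤ colSpan A l' :=
  Submodule.span_mono (fun v => by rintro ⟨q, hq, rfl⟩; exact ⟨q, by omega, rfl⟩)

lemma colSpan_zero : colSpan A 0 = ⊥ := by
  rw [colSpan, eq_bot_iff, Submodule.span_le]
  rintro v ⟨q, hq, rfl⟩
  omega

lemma colSpan_succ {l : ℕ} (hln : l < n) :
    colSpan A (l + 1) = colSpan A l ⊔
      Submodule.span 𝔽 {fun i' => A i' ⟨l, hln⟩} := by
  rw [colSpan, colSpan, ← Submodule.span_union]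
  congr 1
  ext v
  constructor
  · rintro ⟨q, hq, rfl⟩
    rcases Nat.lt_succ_iff_lt_or_eq.1 hq with h' | h'
    · exact Or.inl ⟨q, h', rfl⟩
    · right
      have : q = ⟨l, hln⟩ := Fin.ext h'
      rw [this]; rfl
  · rintro (⟨q, hq, rfl⟩ | hv)
    · exact ⟨q, by omega, rfl⟩
    · exact ⟨⟨l, hln⟩, Nat.lt_succ_self l, hv⟩

lemma colSpan_succ_ge {l : ℕ} (hln : n ≤ l) : colSpan A (l + 1) = colSpan A l := by
  rw [colSpan, colSpan]
  congr 1
  ext v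
  constructor
  · rintro ⟨q, hq, rfl⟩; exact ⟨q, by omega, rfl⟩
  · rintro ⟨q, hq, rfl⟩; exact ⟨q, by omega, rfl⟩

end ColSpan

section Backward

variable [LinearOrder 𝔽]

lemma mem_colSpan_of_lt_col (h0 : ∀ x : 𝔽, (0 : 𝔽) ≤ x)
    (h1 : ∀ x : 𝔽, x ≠ 0 → (1 : 𝔽) ≤ x) (A : Matrix (Fin k) (Fin n) 𝔽)
    (hrig : ∀ s₀ s₁ : Fin k → 𝔽, AntilexLT s₀ s₁ →
      ∃ a, A.mulVec a = s₀ ∧ ∀ b, A.mulVec b = s₁ → AntilexLT a b)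
    (l : Fin n) {s : Fin k → 𝔽} (hs : AntilexLT s fun i' => A i' l) :
    s ∈ colSpan A l.1 := by
  obtain ⟨a, ha, hlt⟩ := hrig s _ hs
  have hb : A.mulVec (Pi.single l 1) = fun i' => A i' l := by
    rw [Matrix.mulVec_single]
    simp
    rfl
  have hsupp := lt_single_support h0 h1 (hlt _ hb)
  rw [← ha]
  exact mulVec_mem_colSpan A fun q hq => hsupp q hq

lemma backward_main (h0 : ∀ x : 𝔽, (0 : 𝔽) ≤ x)
    (h1 : ∀ x : 𝔽, x ≠ 0 → (1 : 𝔽) ≤ x) (A : Matrix (Fin k) (Fin n) 𝔽)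
    (hsurj : Function.Surjective A.mulVec)
    (hrig : ∀ s₀ s₁ : Fin k → 𝔽, AntilexLT s₀ s₁ →
      ∃ a, A.mulVec a = s₀ ∧ ∀ b, A.mulVec b = s₁ → AntilexLT a b) :
    ∃ j : Fin k → Fin n, StrictMono j ∧
      (∀ i : Fin k, (fun i' => A i' (j i)) = Pi.single i 1) ∧
      ∀ i : Fin k, colSpan A (j i).1 = coordSub 𝔽 k i.1 := by
  classical
  have exQ : ∀ l : ℕ, ∃ i, colSpan A l = coordSub 𝔽 k i := by
    intro l
    induction l with
    | zero => exact ⟨0, by rw [colSpan_zero, coordSub_zero]⟩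
    | succ l ih =>
      obtain ⟨i, hi⟩ := ih
      by_cases hln : l < n
      · by_cases hcm : (fun i' => A i' ⟨l, hln⟩) ∈ coordSub 𝔽 k i
        · refine ⟨i, ?_⟩
          rw [colSpan_succ A hln, hi]
          refine le_antisymm (sup_le le_rfl ?_) le_sup_left
          rw [Submodule.span_le, Set.singleton_subset_iff]
          exact hcm
        · have hA : ∀ s, AntilexLT s (fun i' => A i' ⟨l, hln⟩) → s ∈ coordSub 𝔽 k i :=
            fun s hs => hi ▸ mem_colSpan_of_lt_col h0 h1 A hrig ⟨l, hln⟩ hs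
          obtain ⟨hik, hceq⟩ := eq_single_of_lower h0 h1 hA hcm
          refine ⟨i + 1, ?_⟩
          rw [colSpan_succ A hln, hi, hceq, coordSub_succ hik]
      · exact ⟨i, by rw [colSpan_succ_ge A (le_of_not_gt hln), hi]⟩
  set d : ℕ → ℕ := fun l => Nat.find (exQ l) with hdDef
  have hd : ∀ l, colSpan A l = coordSub 𝔽 k (d l) := fun l => Nat.find_spec (exQ l)
  have coordSub_ne : ∀ i i' : ℕ, i < i' → i < k →
      coordSub 𝔽 k i' ≤ coordSub 𝔽 k i → False := by
    intro i i' h hk hle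
    have h1' := hle (single_mem_coordSub.2 (show ((⟨i, hk⟩ : Fin k)).1 < i' from h))
    rw [single_mem_coordSub] at h1'
    simp at h1'
  have d_le_k : ∀ l, d l ≤ k := by
    intro l
    by_contra h
    push_neg at h
    have hEq : colSpan A l = coordSub 𝔽 k k := by
      rw [hd l, coordSub_top (le_of_lt h), coordSub_top le_rfl]
    have hle : d l ≤ k := Nat.find_min' (exQ l) hEq
    omega
  have d_mono : ∀ {l l' : ℕ}, l ≤ l' → d l ≤ d l' := by
    intro l l' h
    by_contra hlt
    push_neg at hlt
    have hk : d l' < k := lt_of_lt_of_le hlt (d_le_k l)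
    refine coordSub_ne (d l') (d l) hlt hk ?_
    rw [← hd l, ← hd l']
    exact colSpan_mono A h
  have d_zero : d 0 = 0 :=
    Nat.le_zero.1 (Nat.find_min' (exQ 0) (by rw [colSpan_zero, coordSub_zero]))
  have span_top : colSpan A n = ⊤ := by
    rw [eq_top_iff]
    intro v _
    obtain ⟨a, rfl⟩ := hsurj v
    exact mulVec_mem_colSpan A fun q hq => absurd q.2 (by omega)
  have d_n : d n = k := by
    have h2 := d_le_k n
    by_contra h
    have hk : d n < k := lt_of_le_of_ne h2 h
    have hmem : (Pi.single (⟨d n, hk⟩ : Fin k) 1 : Fin k → 𝔽) ∈ coordSub 𝔽 k (d n) := by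
      rw [← hd n, span_top]
      trivial
    rw [single_mem_coordSub] at hmem
    simp at hmem
  have jump : ∀ l : ℕ, d (l + 1) ≠ d l → ∃ hln : l < n, ∃ hk : d l < k,
      (fun i' => A i' ⟨l, hln⟩) = Pi.single (⟨d l, hk⟩ : Fin k) 1 ∧ d (l + 1) = d l + 1 := by
    intro l hne
    by_cases hln : l < n
    · by_cases hcm : (fun i' => A i' ⟨l, hln⟩) ∈ coordSub 𝔽 k (d l)
      · exfalso
        apply hne
        have hEq : colSpan A (l + 1) = coordSub 𝔽 k (d l) := by
          rw [colSpan_succ A hln, hd l]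
          refine le_antisymm (sup_le le_rfl ?_) le_sup_left
          rw [Submodule.span_le, Set.singleton_subset_iff]
          exact hcm
        have h1' : d (l + 1) ≤ d l := Nat.find_min' (exQ (l + 1)) hEq
        have h2' : d l ≤ d (l + 1) := d_mono (Nat.le_succ l)
        omega
      · have hA : ∀ s, AntilexLT s (fun i' => A i' ⟨l, hln⟩) → s ∈ coordSub 𝔽 k (d l) :=
          fun s hs => (hd l) ▸ mem_colSpan_of_lt_col h0 h1 A hrig ⟨l, hln⟩ hs
        obtain ⟨hik, hceq⟩ := eq_single_of_lower h0 h1 hA hcm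
        refine ⟨hln, hik, hceq, ?_⟩
        have hEq : colSpan A (l + 1) = coordSub 𝔽 k (d l + 1) := by
          rw [colSpan_succ A hln, hd l, hceq, coordSub_succ hik]
        have h1' : d (l + 1) ≤ d l + 1 := Nat.find_min' (exQ (l + 1)) hEq
        have h2' : d l ≤ d (l + 1) := d_mono (Nat.le_succ l)
        omega
    · exfalso
      apply hne
      have hEq : colSpan A (l + 1) = coordSub 𝔽 k (d l) := by
        rw [colSpan_succ_ge A (le_of_not_gt hln), hd l]
      have h1' : d (l + 1) ≤ d l := Nat.find_min' (exQ (l + 1)) hEq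
      have h2' : d l ≤ d (l + 1) := d_mono (Nat.le_succ l)
      omega
  have piv : ∀ i : Fin k, ∃ l : Fin n,
      (fun i' => A i' l) = Pi.single i 1 ∧ d l.1 = i.1 := by
    intro i
    have hPex : ∃ l, i.1 < d l := ⟨n, by rw [d_n]; exact i.2⟩
    set L := Nat.find hPex with hL
    have hl'spec : i.1 < d L := Nat.find_spec hPex
    have hl'ne : L ≠ 0 := by
      intro h
      rw [h, d_zero] at hl'spec
      omega
    obtain ⟨l, hl⟩ := Nat.exists_eq_succ_of_ne_zero hl'ne
    have hnot : ¬ i.1 < d l := Nat.find_min hPex (by omega)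
    have hl1 : i.1 < d (l + 1) := by rw [← Nat.succ_eq_add_one, ← hl]; exact hl'spec
    have hne : d (l + 1) ≠ d l := by omega
    obtain ⟨hln, hk, hceq, hstep⟩ := jump l hne
    have hdl : d l = i.1 := by omega
    refine ⟨⟨l, hln⟩, ?_, hdl⟩
    exact hceq.trans (congrArg (fun x => Pi.single x 1) (Fin.ext hdl))
  choose j hjpiv hjd using piv
  refine ⟨j, ?_, hjpiv, ?_⟩
  · intro i i' hii
    by_contra h
    push_neg at h
    have := d_mono (show (j i').1 ≤ (j i).1 from h)
    rw [hjd i, hjd i'] at this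
    exact absurd hii (by rw [Fin.lt_def]; omega)
  · intro i
    rw [hd (j i).1, hjd i]

end Backward

section Forward

variable [LinearOrder 𝔽]

lemma forward_main (h0 : ∀ x : 𝔽, (0 : 𝔽) ≤ x) (A : Matrix (Fin k) (Fin n) 𝔽)
    (j : Fin k → Fin n) (hj : StrictMono j)
    (hpiv : ∀ i : Fin k, (fun i' => A i' (j i)) = Pi.single i 1)
    (hcz : ∀ (i : Fin k) (l : Fin n), l < j i → A i l = 0) :
    Function.Surjective A.mulVec ∧ ∀ s₀ s₁ : Fin k → 𝔽, AntilexLT s₀ s₁ →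
      ∃ a, A.mulVec a = s₀ ∧ ∀ b, A.mulVec b = s₁ → AntilexLT a b := by
  classical
  set m : (Fin k → 𝔽) → (Fin n → 𝔽) := fun s => ∑ i : Fin k, Pi.single (j i) (s i) with hmdef
  have hm_pivot : ∀ s (i : Fin k), m s (j i) = s i := by
    intro s i
    rw [hmdef]
    dsimp only
    rw [Finset.sum_apply, Finset.sum_eq_single i]
    · rw [Pi.single_eq_same]
    · intro b _ hb
      exact Pi.single_eq_of_ne (fun h => hb (hj.injective h.symm)) _
    · intro h
      exact absurd (Finset.mem_univ i) h
  have hm_nonpivot : ∀ s (l : Fin n), (∀ i, j i ≠ l) → m s l = 0 := by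
    intro s l hl
    rw [hmdef]
    dsimp only
    rw [Finset.sum_apply]
    exact Finset.sum_eq_zero fun i _ => Pi.single_eq_of_ne (fun h => hl i h.symm) _
  have hAm : ∀ s, A.mulVec (m s) = s := by
    intro s
    have h1 : A.mulVec (m s) = ∑ i : Fin k, A.mulVec (Pi.single (j i) (s i)) := by
      rw [hmdef]
      dsimp only
      rw [← Matrix.mulVecLin_apply, map_sum]
      simp [Matrix.mulVecLin_apply]
    rw [h1]
    funext i'
    rw [Finset.sum_apply]
    have h2 : ∀ i : Fin k, A.mulVec (Pi.single (j i) (s i)) i' = (Pi.single i 1 : Fin k → 𝔽) i' * s i := by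
      intro i
      rw [Matrix.mulVec_single]
      show A i' (j i) * s i = _
      rw [← congrFun (hpiv i) i']
    rw [Finset.sum_congr rfl fun i _ => h2 i]
    simp [Pi.single_apply, ite_mul]
  refine ⟨fun s => ⟨m s, hAm s⟩, ?_⟩
  rintro s₀ s₁ ⟨i, hi, hab⟩
  refine ⟨m s₀, hAm s₀, ?_⟩
  intro b hb
  have hne : m s₀ ≠ b := by
    intro h
    have hss : s₀ = s₁ := by rw [← hAm s₀, h, hb]
    rw [hss] at hi
    exact lt_irrefl _ hi
  obtain ⟨q0, hq0⟩ := Function.ne_iff.1 hne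
  set D := Finset.univ.filter (fun q => m s₀ q ≠ b q) with hDdef
  have hDne : D.Nonempty := ⟨q0, by simp [hDdef, hq0]⟩
  set p := D.max' hDne with hpdef
  have hpne : m s₀ p ≠ b p := by
    have := D.max'_mem hDne
    simpa [hDdef] using this
  have hagree : ∀ q, p < q → m s₀ q = b q := by
    intro q hq
    by_contra hne'
    exact absurd (D.le_max' q (by simp [hDdef, hne'])) (not_le.2 hq)
  refine ⟨p, ?_, hagree⟩
  by_cases hp : ∃ i₀, j i₀ = p
  · obtain ⟨i₀, hpi⟩ := hp
    have hagree' : ∀ q, j i₀ < q → m s₀ q = b q := by rw [hpi]; exact hagree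
    have hpne' : m s₀ (j i₀) ≠ b (j i₀) := by rw [hpi]; exact hpne
    rw [← hpi]
    have hcomp : ∀ i₁ : Fin k, j i₀ ≤ j i₁ →
        s₁ i₁ - s₀ i₁ = b (j i₁) - m s₀ (j i₁) := by
      intro i₁ h₁
      have e1 : ∑ l, A i₁ l * b l = s₁ i₁ := by
        have := congrFun hb i₁
        simpa [Matrix.mulVec, dotProduct] using this
      have e0 : ∑ l, A i₁ l * m s₀ l = s₀ i₁ := by
        have := congrFun (hAm s₀) i₁
        simpa [Matrix.mulVec, dotProduct] using this
      rw [← e1, ← e0, ← Finset.sum_sub_distrib, Finset.sum_eq_single (j i₁)]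
      · have hA1 : A i₁ (j i₁) = 1 := by
          rw [congrFun (hpiv i₁) i₁, Pi.single_eq_same]
        rw [hA1, one_mul, one_mul]
      · intro l _ hl
        rcases lt_or_gt_of_ne hl with h' | h'
        · simp [hcz i₁ l h']
        · rw [hagree' l (lt_of_le_of_lt h₁ h')]
          exact sub_self _
      · intro h
        exact absurd (Finset.mem_univ _) h
    have hd0 := hcomp i₀ le_rfl
    have hne0 : s₁ i₀ - s₀ i₀ ≠ 0 := by
      rw [hd0]
      exact sub_ne_zero.2 (Ne.symm hpne')
    have hi₀le : i₀ ≤ i := by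
      by_contra h
      push_neg at h
      exact hne0 (by rw [hab i₀ h, sub_self])
    rcases eq_or_lt_of_le hi₀le with he | hlt
    · subst he
      have hm0 : m s₀ (j i₀) = s₀ i₀ := hm_pivot s₀ i₀
      rw [hm0] at hd0 ⊢
      have hb0 : b (j i₀) = s₁ i₀ := sub_left_inj.1 hd0.symm
      rw [hb0]
      exact hi
    · exfalso
      have hji : j i₀ < j i := hj hlt
      have hd1 := hcomp i (le_of_lt hji)
      rw [hagree' (j i) hji, sub_self] at hd1
      exact (ne_of_lt hi).symm (sub_eq_zero.1 hd1)
  · push_neg at hp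
    rw [hm_nonpivot s₀ p hp]
    have hbp : b p ≠ 0 := fun h => hpne (by rw [hm_nonpivot s₀ p hp, h])
    exact lt_of_le_of_ne (h0 _) (Ne.symm hbp)

end Forward

end RREFAux


/-- Over a finite field `𝔽` ordered so that `0 < 1` are the first two elements, a full-rank
`k × n` matrix `A` is in RREF iff the linear map `x ↦ A.mulVec x : 𝔽ⁿ → 𝔽ᵏ` is a rigid
surjection with respect to the antilexicographic orders and every standard unit vector
`u_i` of `𝔽ᵏ` appears as a column of `A`. -/
theorem isRREF_iff_rigidSurjection
    (𝔽 : Type) [Field 𝔽] [Fintype 𝔽] [LinearOrder 𝔽]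
    (h0 : ∀ x : 𝔽, (0 : 𝔽) ≤ x) (h1 : ∀ x : 𝔽, x ≠ 0 → (1 : 𝔽) ≤ x)
    (k n : ℕ) (hkn : k ≤ n) (A : Matrix (Fin k) (Fin n) 𝔽) (hrank : A.rank = k) :
    IsRREF A ↔
      (IsRigidSurjectionRel (AntilexLT (𝔽 := 𝔽)) (AntilexLT (𝔽 := 𝔽)) A.mulVec ∧
        ∀ i : Fin k, ∃ l : Fin n, (fun i' => A i' l) = Pi.single i 1) := by
  constructor
  · rintro ⟨j, hj, hpiv, hspan⟩
    have hcz : ∀ (i : Fin k) (l : Fin n), l < j i → A i l = 0 := by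
      intro i l hl
      have hmem : (fun i' => A i' l) ∈ Submodule.span 𝔽
          {v : Fin k → 𝔽 | ∃ l' : Fin n, l' < j i ∧ v = fun i' => A i' l'} :=
        Submodule.subset_span ⟨l, hl, rfl⟩
      rw [hspan i] at hmem
      have hle : Submodule.span 𝔽
          {v : Fin k → 𝔽 | ∃ l' : Fin k, l' < i ∧ v = Pi.single l' 1} ≤
          RREFAux.coordSub 𝔽 k i.1 := by
        rw [Submodule.span_le]
        rintro v ⟨l', hl', rfl⟩
        exact RREFAux.single_mem_coordSub.2 hl'
      exact hle hmem i le_rfl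
    obtain ⟨hsurj, hrig⟩ := RREFAux.forward_main h0 A j hj hpiv hcz
    exact ⟨⟨hsurj, hrig⟩, fun i => ⟨j i, hpiv i⟩⟩
  · rintro ⟨⟨hsurj, hrig⟩, -⟩
    obtain ⟨j, hj, hpiv, hspan⟩ := RREFAux.backward_main h0 h1 A hsurj hrig
    refine ⟨j, hj, hpiv, ?_⟩
    intro i
    have e1 : Submodule.span 𝔽
        {v : Fin k → 𝔽 | ∃ l : Fin n, l < j i ∧ v = fun i' => A i' l} =
        RREFAux.colSpan A (j i).1 := rfl
    have e2 : Submodule.span 𝔽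
        {v : Fin k → 𝔽 | ∃ l : Fin k, l < i ∧ v = Pi.single l 1} =
        RREFAux.coordSub 𝔽 k i.1 := by
      rw [← RREFAux.span_sSet]
      rfl
    rw [e1, e2]
    exact hspan i
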